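/- Let ζ be a primitive m-th root of unity with m > 2 and m dividing n−1, and suppose m divides 2k. Then the q-Catalan number Cat_k(q) = (1/[k+1]_q)·qbinom(2k,k) evaluated at q = ζ equals C(2k/m, k/m) if m divides k, and equals 0 otherwise. -/

import Mathlib

open scoped Classical

noncomputable def qInt {K : Type*} [Field K] (q : K) (n : ℕ) : K :=
  ∑ i ∈ Finset.range n, q ^ i

noncomputable def qFact {K : Type*} [Field K] (q : K) (n : ℕ) : K :=
  ∏ i ∈ Finset.range n, qInt q (i + 1)

noncomputable def qBinom {K : Type*} [Field K] (q : K) (n k : ℕ) : K :=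
  qFact q n / (qFact q k * qFact q (n - k))

noncomputable def qCat {K : Type*} [Field K] (q : K) (n : ℕ) : K :=
  qBinom q (2 * n) n / qInt q (n + 1)

open Polynomial Finset

noncomputable def pInt (n : ℕ) : Polynomial ℚ := ∑ i ∈ Finset.range n, Polynomial.X ^ i
noncomputable def pFact (n : ℕ) : Polynomial ℚ := ∏ i ∈ Finset.range n, pInt (i + 1)

lemma algMap_pInt (n : ℕ) :
    algebraMap (Polynomial ℚ) (RatFunc ℚ) (pInt n) = qInt (RatFunc.X : RatFunc ℚ) n := by
  simp [pInt, qInt, map_sum, map_pow, RatFunc.algebraMap_X]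

lemma algMap_pFact (n : ℕ) :
    algebraMap (Polynomial ℚ) (RatFunc ℚ) (pFact n) = qFact (RatFunc.X : RatFunc ℚ) n := by
  simp only [pFact, qFact, map_prod, algMap_pInt]

lemma pInt_ne_zero {n : ℕ} (h : 0 < n) : pInt n ≠ 0 := by
  intro H
  have := congrArg (Polynomial.eval (1 : ℚ)) H
  simp [pInt] at this
  omega

lemma qInt_X_ne_zero {n : ℕ} (h : 0 < n) : qInt (RatFunc.X : RatFunc ℚ) n ≠ 0 := by
  rw [← algMap_pInt]
  simpa [map_eq_zero_iff _ (IsFractionRing.injective (Polynomial ℚ) (RatFunc ℚ))] using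
    pInt_ne_zero h

lemma qFact_X_ne_zero (n : ℕ) : qFact (RatFunc.X : RatFunc ℚ) n ≠ 0 := by
  unfold qFact
  exact Finset.prod_ne_zero_iff.mpr fun i _ => qInt_X_ne_zero i.succ_pos

lemma prod_shift_eq (s : ℕ) :
    (∏ j ∈ Finset.range s, (s + j + 1)) = (2 * s).choose s * s.factorial := by
  have h1 : ∏ i ∈ Finset.range (2 * s), (i + 1) = (2 * s).factorial :=
    Finset.prod_range_add_one_eq_factorial _
  rw [two_mul, Finset.prod_range_add] at h1
  have h2 := Nat.choose_mul_factorial_mul_factorial (show s ≤ 2 * s by omega)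
  rw [show 2 * s - s = s from by omega] at h2
  have h3 : ∏ i ∈ Finset.range s, (i + 1) = s.factorial :=
    Finset.prod_range_add_one_eq_factorial _
  rw [h3] at h1
  have := Nat.factorial_pos s
  have goal : s.factorial * (∏ j ∈ Finset.range s, (s + j + 1)) =
      s.factorial * ((2 * s).choose s * s.factorial) := by
    rw [h1, show s + s = 2 * s by ring, ← h2]; ring
  exact Nat.eq_of_mul_eq_mul_left (Nat.factorial_pos s) goal

theorem qCatalan_root_of_unity (m n k : ℕ) (hm : 2 < m) (hmn : m ∣ n - 1)
    (h2k : m ∣ 2 * k) (ζ : ℂ) (hζ : IsPrimitiveRoot ζ m)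
    (P : Polynomial ℚ)
    (hP : algebraMap (Polynomial ℚ) (RatFunc ℚ) P = qCat (RatFunc.X : RatFunc ℚ) k) :
    Polynomial.aeval ζ P =
      if m ∣ k then (((2 * k / m).choose (k / m) : ℕ) : ℂ) else 0 := by
  have hm0 : 0 < m := by omega
  have hζpow : ∀ l, ζ ^ l = 1 ↔ m ∣ l := hζ.pow_eq_one_iff_dvd
  -- Step 1: polynomial identity over ℚ
  have hPoly : P * (pFact k ^ 2 * pInt (k + 1)) = pFact (2 * k) := by
    apply IsFractionRing.injective (Polynomial ℚ) (RatFunc ℚ)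
    rw [map_mul, map_mul, map_pow, algMap_pFact, algMap_pInt, algMap_pFact, hP]
    unfold qCat qBinom
    rw [show 2 * k - k = k from by omega]
    field_simp [qFact_X_ne_zero, qInt_X_ne_zero (Nat.succ_pos k)]
  -- Step 2: transport to ℂ[X] via X ↦ ζ X
  set u : Polynomial ℂ := Polynomial.C ζ * Polynomial.X with hu
  have hΦint : ∀ N : ℕ, (Polynomial.aeval u) (pInt N) = ∑ i ∈ range N, u ^ i := by
    intro N; simp [pInt]
  have hΦfact : ∀ N : ℕ, (Polynomial.aeval u) (pFact N)
      = ∏ i ∈ range N, ∑ j ∈ range (i + 1), u ^ j := by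
    intro N; simp only [pFact, map_prod, hΦint]
  have hC : (Polynomial.aeval u) P *
      ((∏ i ∈ range k, ∑ j ∈ range (i + 1), u ^ j) ^ 2 * (∑ j ∈ range (k + 1), u ^ j)) =
      ∏ i ∈ range (2 * k), ∑ j ∈ range (i + 1), u ^ j := by
    have := congrArg (Polynomial.aeval u) hPoly
    simpa only [map_mul, map_pow, hΦint, hΦfact] using this
  -- Step 3: multiply by (u-1)^(2k+1)
  have hstar : (Polynomial.aeval u) P *
      ((∏ i ∈ range k, (u ^ (i + 1) - 1)) ^ 2 * (u ^ (k + 1) - 1)) =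
      (∏ i ∈ range (2 * k), (u ^ (i + 1) - 1)) * (u - 1) := by
    have e : ∀ N : ℕ, ∏ i ∈ range N, (u ^ (i + 1) - 1)
        = (∏ i ∈ range N, ∑ j ∈ range (i + 1), u ^ j) * (u - 1) ^ N := by
      intro N
      have e2 : (∏ i ∈ range N, ∑ j ∈ range (i + 1), u ^ j) * (u - 1) ^ N
          = ∏ i ∈ range N, ((∑ j ∈ range (i + 1), u ^ j) * (u - 1)) := by
        rw [Finset.prod_mul_distrib, Finset.prod_const, Finset.card_range]
      rw [e2]
      exact Finset.prod_congr rfl fun i _ => (geom_sum_mul u (i + 1)).symm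
    rw [e, e, ← geom_sum_mul u (k + 1)]
    linear_combination hC * (u - 1) ^ (2 * k + 1)
  -- Step 4: factor out powers of (X - 1)
  set w : ℕ → Polynomial ℂ := fun N =>
    if m ∣ N then ∑ j ∈ range N, Polynomial.X ^ j else u ^ N - 1 with hw
  have hfac : ∀ N : ℕ, (∏ i ∈ range N, (u ^ (i + 1) - 1))
      = (Polynomial.X - 1) ^ (N / m) * ∏ i ∈ range N, w (i + 1) := by
    intro N
    have e1 : ∀ i : ℕ, u ^ (i + 1) - 1
        = (Polynomial.X - 1) ^ (if m ∣ (i + 1) then 1 else 0) * w (i + 1) := by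
      intro i
      by_cases hd : m ∣ (i + 1)
      · have hup : u ^ (i + 1) = Polynomial.X ^ (i + 1) := by
          rw [hu, mul_pow, ← Polynomial.C_pow, (hζpow _).mpr hd]; simp
        rw [hup]
        simp only [hw, hd, if_pos, if_true, pow_one]
        rw [← geom_sum_mul Polynomial.X (i + 1)]
        ring
      · simp [hw, hd]
    calc ∏ i ∈ range N, (u ^ (i + 1) - 1)
        = ∏ i ∈ range N, ((Polynomial.X - 1) ^ (if m ∣ (i + 1) then 1 else 0) * w (i + 1)) :=
          Finset.prod_congr rfl fun i _ => e1 i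
      _ = (Polynomial.X - 1) ^ (∑ i ∈ range N, if m ∣ (i + 1) then 1 else 0)
            * ∏ i ∈ range N, w (i + 1) := by
          rw [Finset.prod_mul_distrib, Finset.prod_pow_eq_pow_sum]
      _ = (Polynomial.X - 1) ^ (N / m) * ∏ i ∈ range N, w (i + 1) := by
          congr 1
          rw [Finset.sum_ite, Finset.sum_const, Finset.sum_const]
          simp [Nat.card_multiples N m]
  have hX1 : (Polynomial.X - 1 : Polynomial ℂ) ≠ 0 := by
    intro H
    have := congrArg (Polynomial.eval (0 : ℂ)) H
    simp at this
  -- eval-at-1 facts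
  set v : ℕ → ℂ := fun N => if m ∣ N then (N : ℂ) else ζ ^ N - 1 with hv
  have hwv : ∀ N, Polynomial.eval (1 : ℂ) (w N) = v N := by
    intro N; by_cases hd : m ∣ N <;> simp [hw, hv, hd, hu]
  have hevalW : ∀ N, Polynomial.eval (1 : ℂ) (∏ i ∈ range N, w (i + 1))
      = ∏ i ∈ range N, v (i + 1) := by
    intro N; rw [Polynomial.eval_prod]; exact Finset.prod_congr rfl fun i _ => hwv _
  have hPev : Polynomial.eval (1 : ℂ) ((Polynomial.aeval u) P) = Polynomial.aeval ζ P := by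
    have h := Polynomial.aeval_algHom_apply
      ((Polynomial.aeval (1 : ℂ)).restrictScalars ℚ) u P
    simp only [AlgHom.restrictScalars_apply] at h
    rw [show (Polynomial.aeval (1 : ℂ)) u = ζ by simp [hu]] at h
    rw [← Polynomial.coe_aeval_eq_eval, ← h]
  have hvne : ∀ N : ℕ, v (N + 1) ≠ 0 := by
    intro N
    by_cases hd : m ∣ (N + 1)
    · simp only [hv, hd, if_pos]
      exact_mod_cast Nat.succ_ne_zero N
    · simp only [hv, hd, if_neg, not_false_iff]
      exact sub_ne_zero.mpr (fun H => hd ((hζpow _).mp H))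
  have hVne : ∀ N : ℕ, (∏ i ∈ range N, v (i + 1)) ≠ 0 := fun N =>
    Finset.prod_ne_zero_iff.mpr fun i _ => hvne i
  by_cases hdk : m ∣ k
  · -- divisible case
    obtain ⟨s, hs⟩ := hdk
    have hks : k / m = s := by rw [hs]; exact Nat.mul_div_cancel_left s hm0
    have h2ks : 2 * k / m = 2 * s := by
      rw [hs, show 2 * (m * s) = m * (2 * s) by ring]
      exact Nat.mul_div_cancel_left _ hm0
    rw [hfac, hfac, hks, h2ks] at hstar
    have hcancel : (Polynomial.aeval u) P *
        ((∏ i ∈ range k, w (i + 1)) ^ 2 * (u ^ (k + 1) - 1)) =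
        (∏ i ∈ range (2 * k), w (i + 1)) * (u - 1) := by
      apply mul_left_cancel₀ (pow_ne_zero (2 * s) hX1)
      linear_combination hstar
    have heval := congrArg (Polynomial.eval (1 : ℂ)) hcancel
    simp only [Polynomial.eval_mul, Polynomial.eval_pow, Polynomial.eval_sub,
      Polynomial.eval_one, hevalW, hPev, hu, Polynomial.eval_C, Polynomial.eval_X,
      mul_one] at heval
    rw [← hu, hPev] at heval
    have hζk : ζ ^ (k + 1) = ζ := by
      rw [pow_succ, (hζpow k).mpr ⟨s, hs⟩, one_mul]
    rw [hζk] at heval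
    have hζ1 : (ζ - 1) ≠ 0 := sub_ne_zero.mpr (hζ.ne_one (by omega))
    have hmain : Polynomial.aeval ζ P * (∏ i ∈ range k, v (i + 1)) ^ 2
        = ∏ i ∈ range (2 * k), v (i + 1) := by
      apply mul_right_cancel₀ hζ1
      linear_combination heval
    -- split products over residues
    have hVk : (∏ i ∈ range k, v (i + 1)) =
        (∏ i ∈ (range k).filter (fun i => m ∣ (i + 1)), ((i + 1 : ℕ) : ℂ)) *
        ∏ i ∈ (range k).filter (fun i => ¬ m ∣ (i + 1)), (ζ ^ (i + 1) - 1) := by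
      simp only [hv]
      exact Finset.prod_ite _ _
    have hVshift : (∏ i ∈ range k, v (k + i + 1)) =
        (∏ i ∈ (range k).filter (fun i => m ∣ (i + 1)), ((k + i + 1 : ℕ) : ℂ)) *
        ∏ i ∈ (range k).filter (fun i => ¬ m ∣ (i + 1)), (ζ ^ (i + 1) - 1) := by
      have e3 : ∀ i, v (k + i + 1)
          = if m ∣ (i + 1) then ((k + i + 1 : ℕ) : ℂ) else ζ ^ (i + 1) - 1 := by
        intro i
        have hdd : m ∣ (k + i + 1) ↔ m ∣ (i + 1) := by
          rw [show k + i + 1 = k + (i + 1) by ring]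
          exact ⟨fun h => (Nat.dvd_add_right ⟨s, hs⟩).mp h,
            fun h => Dvd.dvd.add ⟨s, hs⟩ h⟩
        by_cases hd : m ∣ (i + 1)
        · simp [hv, hdd, hd]
        · simp only [hv, hdd, hd, if_neg, not_false_iff]
          rw [show k + i + 1 = k + (i + 1) by ring, pow_add, (hζpow k).mpr ⟨s, hs⟩, one_mul]
      rw [Finset.prod_congr rfl fun i _ => e3 i]
      exact Finset.prod_ite _ _
    have hV2k : (∏ i ∈ range (2 * k), v (i + 1)) =
        (∏ i ∈ range k, v (i + 1)) * ∏ i ∈ range k, v (k + i + 1) := by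
      rw [two_mul, Finset.prod_range_add]
    -- reindex multiples of m
    have hreindex : ∀ f : ℕ → ℂ,
        (∏ i ∈ (range k).filter (fun i => m ∣ (i + 1)), f (i + 1))
          = ∏ j ∈ range s, f (m * (j + 1)) := by
      intro f
      apply Finset.prod_nbij' (fun i => i / m) (fun j => m * j + (m - 1))
      · intro a ha
        simp only [Finset.mem_filter, Finset.mem_range] at ha
        simp only [Finset.mem_range]
        exact Nat.div_lt_of_lt_mul (by omega)
      · intro a ha
        simp only [Finset.mem_range] at ha
        simp only [Finset.mem_filter, Finset.mem_range]
        have h1 : m * (a + 1) ≤ m * s := Nat.mul_le_mul_left m (by omega)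
        rw [mul_add, mul_one] at h1
        refine ⟨by omega, ⟨a + 1, by rw [mul_add, mul_one]; omega⟩⟩
      · intro a ha
        simp only [Finset.mem_filter, Finset.mem_range] at ha
        obtain ⟨c, hc⟩ := ha.2
        have hc0 : c ≠ 0 := by rintro rfl; simp at hc
        obtain ⟨c', rfl⟩ := Nat.exists_eq_succ_of_ne_zero hc0
        rw [Nat.succ_eq_add_one, mul_add, mul_one] at hc
        have ha2 : a = m * c' + (m - 1) := by omega
        rw [ha2, Nat.mul_add_div hm0, Nat.div_eq_of_lt (by omega), Nat.add_zero]
      · intro a ha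
        simp only [Finset.mem_range] at ha
        rw [Nat.mul_add_div hm0, Nat.div_eq_of_lt (by omega), Nat.add_zero]
      · intro a ha
        simp only [Finset.mem_filter, Finset.mem_range] at ha
        obtain ⟨c, hc⟩ := ha.2
        have hc0 : c ≠ 0 := by rintro rfl; simp at hc
        obtain ⟨c', rfl⟩ := Nat.exists_eq_succ_of_ne_zero hc0
        rw [Nat.succ_eq_add_one, mul_add, mul_one] at hc
        have ha2 : a = m * c' + (m - 1) := by omega
        congr 1
        rw [ha2, Nat.mul_add_div hm0, Nat.div_eq_of_lt (by omega)]
        simp only [Nat.add_zero]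
        rw [mul_add, mul_one]
        omega
    have hNat : (∏ j ∈ range s, (k + m * (j + 1))) =
        (2 * s).choose s * ∏ j ∈ range s, (m * (j + 1)) := by
      have e4 : ∀ j, k + m * (j + 1) = m * (s + j + 1) := by
        intro j; rw [hs]; ring
      rw [Finset.prod_congr rfl fun j _ => e4 j]
      rw [Finset.prod_mul_distrib, Finset.prod_mul_distrib,
        Finset.prod_const, Finset.card_range]
      rw [prod_shift_eq s, Finset.prod_range_add_one_eq_factorial]
      ring
    have hDk : (∏ i ∈ (range k).filter (fun i => m ∣ (i + 1)), ((i + 1 : ℕ) : ℂ))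
        = ((∏ j ∈ range s, (m * (j + 1)) : ℕ) : ℂ) := by
      rw [Nat.cast_prod]
      exact hreindex (fun N => (N : ℂ))
    have hEk : (∏ i ∈ (range k).filter (fun i => m ∣ (i + 1)), ((k + i + 1 : ℕ) : ℂ))
        = (((2 * s).choose s : ℕ) : ℂ) *
          ∏ i ∈ (range k).filter (fun i => m ∣ (i + 1)), ((i + 1 : ℕ) : ℂ) := by
      have hL : (∏ i ∈ (range k).filter (fun i => m ∣ (i + 1)), ((k + i + 1 : ℕ) : ℂ))
          = ∏ j ∈ range s, ((k + m * (j + 1) : ℕ) : ℂ) := by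
        rw [← hreindex (fun N => ((k + N : ℕ) : ℂ))]
        exact Finset.prod_congr rfl fun i _ => by rw [add_assoc]
      rw [hL, ← Nat.cast_prod, hNat, hDk, Nat.cast_mul]
    have hfin : (Polynomial.aeval ζ) P * (∏ i ∈ range k, v (i + 1)) ^ 2
        = (((2 * s).choose s : ℕ) : ℂ) * (∏ i ∈ range k, v (i + 1)) ^ 2 := by
      rw [hmain, hV2k, hVshift, hEk, hVk]; ring
    have hfin2 := mul_right_cancel₀ (pow_ne_zero 2 (hVne k)) hfin
    rw [if_pos ⟨s, hs⟩, hks, h2ks]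
    exact hfin2
  · -- non-divisible case
    obtain ⟨c, hc⟩ := h2k
    have hc_odd : ¬ (2 ∣ c) := by
      rintro ⟨d, rfl⟩
      rw [show m * (2 * d) = 2 * (m * d) by ring] at hc
      exact hdk ⟨d, by omega⟩
    have h2m : (2 : ℕ) ∣ m :=
      (Nat.prime_two.dvd_mul.mp ⟨k, by omega⟩).resolve_right hc_odd
    obtain ⟨e, hme⟩ := h2m
    obtain ⟨d, hcd⟩ : ∃ d, c = 2 * d + 1 := ⟨c / 2, by omega⟩
    have hke : k = m * d + e := by
      have h5 : 2 * k = 2 * (m * d + e) := by rw [hc, hcd, hme]; ring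
      omega
    have hkdm : k / m = d := by
      rw [hke, Nat.mul_add_div hm0, Nat.div_eq_of_lt (by omega), Nat.add_zero]
    have hk2m : 2 * k / m = 2 * (k / m) + 1 := by
      rw [hc, Nat.mul_div_cancel_left c hm0, hkdm, hcd]
    rw [hfac, hfac, hk2m] at hstar
    have hcancel : (Polynomial.aeval u) P *
        ((∏ i ∈ range k, w (i + 1)) ^ 2 * (u ^ (k + 1) - 1)) =
        (Polynomial.X - 1) * ((∏ i ∈ range (2 * k), w (i + 1)) * (u - 1)) := by
      apply mul_left_cancel₀ (pow_ne_zero (2 * (k / m)) hX1)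
      linear_combination hstar
    have heval := congrArg (Polynomial.eval (1 : ℂ)) hcancel
    simp only [Polynomial.eval_mul, Polynomial.eval_pow, Polynomial.eval_sub,
      Polynomial.eval_one, Polynomial.eval_X, hevalW, hPev, hu, Polynomial.eval_C,
      mul_one, sub_self, zero_mul] at heval
    rw [← hu, hPev] at heval
    have hnk1 : ¬ m ∣ (k + 1) := by
      intro hd
      have hdvd2 : m ∣ 2 := by
        have h6 := Nat.dvd_sub (Dvd.dvd.mul_left hd 2) ⟨c, hc⟩
        simpa [show 2 * (k + 1) - 2 * k = 2 by omega] using h6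
      have := Nat.le_of_dvd (by norm_num) hdvd2
      omega
    have hz : ζ ^ (k + 1) - 1 ≠ 0 := sub_ne_zero.mpr fun H => hnk1 ((hζpow _).mp H)
    rw [if_neg hdk]
    rcases mul_eq_zero.mp heval with h | h
    · exact h
    · exact absurd h (mul_ne_zero (pow_ne_zero 2 (hVne k)) hz)
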